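/- arXiv:2203.09635 — 4 statements merged into one kernel-verified Lean document; each statement's English description precedes it below -/
import Mathlib

section
/- Let l1, l2, l3 > 0 and let n1, n2, n3 be positive integers with l1/n1 = l2/n2 = l3/n3 and n1 + n2 + n3 even. Set k = n1*π/l1 and define V1(x) = sin(k x), V2(x) = (-1)^{n1} sin(k x), V3(x) = -sin(k x). Then V1(0) = V3(0) = 0, V1(l1) = V2(0) = 0, V3(l3) = V2(l2) = 0, V1'(0) + V3'(0) = 0, V1'(l1) - V2'(0) = 0, V3'(l3) + V2'(l2) = 0, and none of V1, V2, V3 is identically zero (so these functions form a localized eigenvector of the generalized Laplacian supported on the triangle, with eigenvalue -k²). -/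
open Real

lemma cos_nat_pi (n : ℕ) : Real.cos ((n : ℝ) * π) = (-1 : ℝ) ^ n := by
  simpa using Real.cos_add_nat_mul_pi 0 n

lemma deriv_sin_mul (k t : ℝ) :
    deriv (fun x => Real.sin (k * x)) t = k * Real.cos (k * t) := by
  have h1 : HasDerivAt (fun x : ℝ => k * x) k t := by
    simpa using (hasDerivAt_id t).const_mul k
  have h : HasDerivAt (fun x => Real.sin (k * x)) (Real.cos (k * t) * k) t :=
    (Real.hasDerivAt_sin (k * t)).comp t h1
  rw [h.deriv]; ring

/-- A localized eigenvector exists on a triangle 1-2-3 embedded in a metric graph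
when the resonance conditions on the lengths hold. -/
theorem triangle_localized_eigenvector
    (l1 l2 l3 : ℝ) (hl1 : 0 < l1) (hl2 : 0 < l2) (hl3 : 0 < l3)
    (n1 n2 n3 : ℕ) (hn1 : 0 < n1) (hn2 : 0 < n2) (hn3 : 0 < n3)
    (h12 : l1 / (n1 : ℝ) = l2 / (n2 : ℝ))
    (h23 : l2 / (n2 : ℝ) = l3 / (n3 : ℝ))
    (heven : Even (n1 + n2 + n3)) :
    let k := (n1 : ℝ) * π / l1
    let V1 : ℝ → ℝ := fun x => Real.sin (k * x)
    let V2 : ℝ → ℝ := fun x => (-1 : ℝ) ^ n1 * Real.sin (k * x)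
    let V3 : ℝ → ℝ := fun x => -Real.sin (k * x)
    V1 0 = 0 ∧ V3 0 = 0 ∧
    V1 l1 = 0 ∧ V2 0 = 0 ∧
    V3 l3 = 0 ∧ V2 l2 = 0 ∧
    deriv V1 0 + deriv V3 0 = 0 ∧
    deriv V1 l1 - deriv V2 0 = 0 ∧
    deriv V3 l3 + deriv V2 l2 = 0 ∧
    V1 ≠ 0 ∧ V2 ≠ 0 ∧ V3 ≠ 0 := by
  intro k V1 V2 V3
  have hn1' : (0 : ℝ) < n1 := by exact_mod_cast hn1
  have hn2' : (0 : ℝ) < n2 := by exact_mod_cast hn2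
  have hn3' : (0 : ℝ) < n3 := by exact_mod_cast hn3
  have hk : 0 < k := by
    apply div_pos (mul_pos hn1' Real.pi_pos) hl1
  have hkl1 : k * l1 = (n1 : ℝ) * π := by
    simp only [k]; field_simp
  have hkl2 : k * l2 = (n2 : ℝ) * π := by
    have hl2' : l2 = l1 * n2 / n1 := by
      field_simp at h12 ⊢; linarith [h12]
    rw [hl2']; simp only [k]; field_simp
  have hkl3 : k * l3 = (n3 : ℝ) * π := by
    have h13 : l1 / (n1 : ℝ) = l3 / (n3 : ℝ) := h12.trans h23
    have hl3' : l3 = l1 * n3 / n1 := by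
      field_simp at h13 ⊢; linarith [h13]
    rw [hl3']; simp only [k]; field_simp
  have hV3 : V3 = fun x => -Real.sin (k * x) := rfl
  have hdV3 : ∀ t, deriv V3 t = -(k * Real.cos (k * t)) := by
    intro t
    have : deriv V3 t = -deriv (fun x => Real.sin (k * x)) t := by
      rw [hV3, deriv.fun_neg]
    rw [this, deriv_sin_mul]
  have hdV2 : ∀ t, deriv V2 t = (-1 : ℝ) ^ n1 * (k * Real.cos (k * t)) := by
    intro t
    have h : deriv V2 t = (-1 : ℝ) ^ n1 * deriv (fun x => Real.sin (k * x)) t := by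
      simp only [V2]
      rw [deriv_const_mul]
      exact ((Real.hasDerivAt_sin (k * t)).comp t
        (by simpa using (hasDerivAt_id t).const_mul k)).differentiableAt
    rw [h, deriv_sin_mul]
  have hsin1 : Real.sin (k * l1) = 0 := by rw [hkl1]; exact Real.sin_nat_mul_pi n1
  have hsin2 : Real.sin (k * l2) = 0 := by rw [hkl2]; exact Real.sin_nat_mul_pi n2
  have hsin3 : Real.sin (k * l3) = 0 := by rw [hkl3]; exact Real.sin_nat_mul_pi n3
  have hcos1 : Real.cos (k * l1) = (-1 : ℝ) ^ n1 := by rw [hkl1]; exact cos_nat_pi n1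
  have hcos2 : Real.cos (k * l2) = (-1 : ℝ) ^ n2 := by rw [hkl2]; exact cos_nat_pi n2
  have hcos3 : Real.cos (k * l3) = (-1 : ℝ) ^ n3 := by rw [hkl3]; exact cos_nat_pi n3
  have hpm : ((-1 : ℝ)) ^ (n1 + n2) = (-1 : ℝ) ^ n3 := by
    have := heven.neg_one_pow (α := ℝ)
    rw [pow_add] at this
    have h3 : ((-1 : ℝ) ^ n3) * ((-1:ℝ)^n3) = 1 := by
      rcases Nat.even_or_odd n3 with h | h
      · rw [h.neg_one_pow]; norm_num
      · rw [h.neg_one_pow]; norm_num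
    calc ((-1 : ℝ)) ^ (n1 + n2) = ((-1:ℝ))^(n1+n2) * (((-1:ℝ)^n3) * ((-1:ℝ)^n3)) := by
          rw [h3]; ring
      _ = (((-1:ℝ))^(n1+n2) * ((-1:ℝ)^n3)) * ((-1:ℝ)^n3) := by ring
      _ = (-1:ℝ)^n3 := by rw [this]; ring
  have hne : ∀ (c : ℝ), c ≠ 0 → (fun x => c * Real.sin (k * x)) ≠ (0 : ℝ → ℝ) := by
    intro c hc h
    have := congrFun h (π / (2 * k))
    simp only [Pi.zero_apply] at this
    rw [show k * (π / (2 * k)) = π / 2 by field_simp, Real.sin_pi_div_two] at this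
    simp at this
    exact hc this
  refine ⟨by simp [V1], by simp [V3], ?_, by simp [V2], ?_, ?_, ?_, ?_, ?_, ?_, ?_, ?_⟩
  · simpa [V1] using hsin1
  · simpa [V3] using hsin3
  · simp [V2, hsin2]
  · rw [show deriv V1 = deriv (fun x => Real.sin (k * x)) from rfl, deriv_sin_mul, hdV3 0]
    ring
  · rw [show deriv V1 = deriv (fun x => Real.sin (k * x)) from rfl, deriv_sin_mul, hdV2 0,
      hcos1]
    simp; ring
  · rw [hdV3 l3, hdV2 l2, hcos3, hcos2, ← hpm, pow_add]
    ring
  · have := hne 1 one_ne_zero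
    intro h; apply this; funext x
    simpa using congrFun h x
  · exact hne _ (pow_ne_zero n1 (by norm_num))
  · have := hne (-1) (by norm_num)
    intro h; apply this; funext x
    have hx := congrFun h x
    simp only [V3, Pi.zero_apply] at hx
    simpa using hx
end

section
/- Let k > 0, l1, l2, l3 > 0 and real coefficients A_j, B_j (j = 1,2,3), not all zero, and set V_j(x) = A_j sin(k x) + B_j cos(k x). Suppose V1(0) = V3(0) = 0, V1(l1) = V2(0) = 0, V3(l3) = V2(l2) = 0, V1'(0) + V3'(0) = 0, V1'(l1) - V2'(0) = 0, and V3'(l3) + V2'(l2) = 0. Then there exist positive integers n1, n2, n3 such that k l_j = n_j π for j = 1,2,3, the sum n1 + n2 + n3 is even, and B1 = B2 = B3 = 0, A1 ≠ 0, A3 = -A1, A2 = (-1)^{n1} A1. In particular l1/n1 = l2/n2 = l3/n3. -/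
open Real

lemma mode_deriv (A B k t : ℝ) :
    deriv (fun x => A * Real.sin (k * x) + B * Real.cos (k * x)) t
      = k * (A * Real.cos (k * t) - B * Real.sin (k * t)) := by
  have hid : HasDerivAt (fun x : ℝ => k * x) (k * 1) t := (hasDerivAt_id t).const_mul k
  have hs : HasDerivAt (fun x : ℝ => Real.sin (k * x)) (Real.cos (k * t) * (k * 1)) t :=
    (Real.hasDerivAt_sin (k * t)).comp t hid
  have hc : HasDerivAt (fun x : ℝ => Real.cos (k * x)) (-Real.sin (k * t) * (k * 1)) t :=
    (Real.hasDerivAt_cos (k * t)).comp t hid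
  have := ((hs.const_mul A).add (hc.const_mul B)).deriv
  refine Eq.trans this ?_; ring

lemma sin_pos_mul (k l : ℝ) (hkl : 0 < k * l) (h : Real.sin (k * l) = 0) :
    ∃ n : ℕ, 0 < n ∧ k * l = (n : ℝ) * π := by
  obtain ⟨m, hm⟩ := Real.sin_eq_zero_iff.mp h
  have hmpos : 0 < m := by
    by_contra hneg
    push_neg at hneg
    have : (m : ℝ) * π ≤ 0 :=
      mul_nonpos_of_nonpos_of_nonneg (by exact_mod_cast hneg) Real.pi_pos.le
    linarith [hm ▸ hkl]
  refine ⟨m.toNat, by omega, ?_⟩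
  rw [← hm]
  congr 1
  exact_mod_cast (Int.toNat_of_nonneg hmpos.le).symm

/-- Converse for the triangle: any nontrivial Helmholtz mode localized on a
triangle 1-2-3 forces the resonance conditions. -/
theorem triangle_localized_eigenvector_necessary
    (k l1 l2 l3 : ℝ) (hk : 0 < k) (hl1 : 0 < l1) (hl2 : 0 < l2) (hl3 : 0 < l3)
    (A1 B1 A2 B2 A3 B3 : ℝ)
    (hne : ¬(A1 = 0 ∧ B1 = 0 ∧ A2 = 0 ∧ B2 = 0 ∧ A3 = 0 ∧ B3 = 0))
    (V1 V2 V3 : ℝ → ℝ)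
    (hV1 : V1 = fun x => A1 * Real.sin (k * x) + B1 * Real.cos (k * x))
    (hV2 : V2 = fun x => A2 * Real.sin (k * x) + B2 * Real.cos (k * x))
    (hV3 : V3 = fun x => A3 * Real.sin (k * x) + B3 * Real.cos (k * x))
    (h1 : V1 0 = 0) (h2 : V3 0 = 0)
    (h3 : V1 l1 = 0) (h4 : V2 0 = 0)
    (h5 : V3 l3 = 0) (h6 : V2 l2 = 0)
    (h7 : deriv V1 0 + deriv V3 0 = 0)
    (h8 : deriv V1 l1 - deriv V2 0 = 0)
    (h9 : deriv V3 l3 + deriv V2 l2 = 0) :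
    ∃ n1 n2 n3 : ℕ, 0 < n1 ∧ 0 < n2 ∧ 0 < n3 ∧
      k * l1 = (n1 : ℝ) * π ∧ k * l2 = (n2 : ℝ) * π ∧ k * l3 = (n3 : ℝ) * π ∧
      Even (n1 + n2 + n3) ∧
      B1 = 0 ∧ B2 = 0 ∧ B3 = 0 ∧
      A1 ≠ 0 ∧ A3 = -A1 ∧ A2 = (-1 : ℝ) ^ n1 * A1 ∧
      l1 / (n1 : ℝ) = l2 / (n2 : ℝ) ∧ l2 / (n2 : ℝ) = l3 / (n3 : ℝ) := by
  subst hV1 hV2 hV3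
  rw [mode_deriv, mode_deriv] at h7 h8 h9
  simp only [mul_zero, Real.sin_zero, Real.cos_zero, mul_one, sub_zero] at h1 h2 h3 h4 h5 h6 h7 h8 h9
  have hB1 : B1 = 0 := by linarith
  have hB3 : B3 = 0 := by linarith
  have hB2 : B2 = 0 := by linarith
  subst hB1 hB2 hB3
  simp only [zero_mul, mul_zero, add_zero, sub_zero] at h3 h5 h6 h7 h8 h9
  have hk' : k ≠ 0 := hk.ne'
  have hA3 : A3 = -A1 := by
    have e : k * (A1 + A3) = 0 := by linear_combination h7
    rcases mul_eq_zero.mp e with h | h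
    · exact absurd h hk'
    · linarith
  have hA1 : A1 ≠ 0 := by
    intro h
    subst h
    have hA3' : A3 = 0 := by simpa using hA3
    have e : k * A2 = 0 := by linear_combination -h8
    rcases mul_eq_zero.mp e with h | h
    · exact absurd h hk'
    · exact hne (by simp [h, hA3'])
  have hs1 : Real.sin (k * l1) = 0 := by
    rcases mul_eq_zero.mp h3 with h | h
    · exact absurd h hA1
    · exact h
  have hA3ne : A3 ≠ 0 := by rw [hA3]; simpa using hA1
  have hs3 : Real.sin (k * l3) = 0 := by
    rcases mul_eq_zero.mp h5 with h | h
    · exact absurd h hA3ne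
    · exact h
  obtain ⟨n1, hn1, hkl1⟩ := sin_pos_mul k l1 (mul_pos hk hl1) hs1
  obtain ⟨n3, hn3, hkl3⟩ := sin_pos_mul k l3 (mul_pos hk hl3) hs3
  have hA2 : A2 = (-1 : ℝ) ^ n1 * A1 := by
    rw [hkl1, cos_nat_pi] at h8
    have e : k * ((-1 : ℝ) ^ n1 * A1 - A2) = 0 := by linear_combination h8
    rcases mul_eq_zero.mp e with h | h
    · exact absurd h hk'
    · linarith
  have hA2ne : A2 ≠ 0 := by
    rw [hA2]
    exact mul_ne_zero (pow_ne_zero _ (by norm_num)) hA1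
  have hs2 : Real.sin (k * l2) = 0 := by
    rcases mul_eq_zero.mp h6 with h | h
    · exact absurd h hA2ne
    · exact h
  obtain ⟨n2, hn2, hkl2⟩ := sin_pos_mul k l2 (mul_pos hk hl2) hs2
  rw [hkl3, hkl2, cos_nat_pi, cos_nat_pi, hA3, hA2] at h9
  have e : (k * A1) * ((-1 : ℝ) ^ n1 * (-1 : ℝ) ^ n2 - (-1 : ℝ) ^ n3) = 0 := by
    linear_combination h9
  have e2 : (-1 : ℝ) ^ n1 * (-1 : ℝ) ^ n2 = (-1 : ℝ) ^ n3 := by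
    rcases mul_eq_zero.mp e with h | h
    · exact absurd h (mul_ne_zero hk' hA1)
    · linarith
  have hpar : (-1 : ℝ) ^ (n1 + n2 + n3) = 1 := by
    have h33 : (-1 : ℝ) ^ (n3 + n3) = 1 := Even.neg_one_pow ⟨n3, rfl⟩
    calc (-1 : ℝ) ^ (n1 + n2 + n3) = (-1 : ℝ) ^ n1 * (-1 : ℝ) ^ n2 * (-1 : ℝ) ^ n3 := by
          rw [pow_add, pow_add]
      _ = (-1 : ℝ) ^ n3 * (-1 : ℝ) ^ n3 := by rw [e2]
      _ = 1 := by rw [← pow_add]; exact h33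
  have hev : Even (n1 + n2 + n3) := by
    rcases Nat.even_or_odd (n1 + n2 + n3) with h | h
    · exact h
    · exfalso; rw [h.neg_one_pow] at hpar; norm_num at hpar
  have hn1' : (n1 : ℝ) ≠ 0 := by exact_mod_cast hn1.ne'
  have hn2' : (n2 : ℝ) ≠ 0 := by exact_mod_cast hn2.ne'
  have hn3' : (n3 : ℝ) ≠ 0 := by exact_mod_cast hn3.ne'
  refine ⟨n1, n2, n3, hn1, hn2, hn3, hkl1, hkl2, hkl3, hev, rfl, rfl, rfl, hA1, hA3, hA2, ?_, ?_⟩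
  · rw [div_eq_div_iff hn1' hn2']
    have e : k * (l1 * n2) = k * (l2 * n1) := by
      linear_combination (n2 : ℝ) * hkl1 - (n1 : ℝ) * hkl2
    exact mul_left_cancel₀ hk' e
  · rw [div_eq_div_iff hn2' hn3']
    have e : k * (l2 * n3) = k * (l3 * n2) := by
      linear_combination (n3 : ℝ) * hkl2 - (n2 : ℝ) * hkl3
    exact mul_left_cancel₀ hk' e
end

section
/- Let l1, l2, l3, l4 > 0 and let n1, n2, n3, n4 be positive integers with l1/n1 = l2/n2 = l3/n3 = l4/n4 and n1 + n2 + n3 + n4 even. Set k = n1*π/l1, ε_1 = 1, ε_{j+1} = (-1)^{n_j} ε_j for j = 1,2,3, and define V_j(x) = ε_j sin(k x) for j = 1,...,4. Then V_j(0) = V_j(l_j) = 0 for all j and V_j'(l_j) = V_{j+1}'(0) for j = 1,2,3,4 (indices cyclic mod 4), and none of the V_j is identically zero (a localized eigenvector on the quadrilateral with eigenvalue -k²). -/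
open Real

lemma deriv_eps_sin (ε k : ℝ) (x : ℝ) :
    deriv (fun x => ε * Real.sin (k * x)) x = ε * k * Real.cos (k * x) := by
  have h : HasDerivAt (fun x => ε * Real.sin (k * x)) (ε * (Real.cos (k * x) * (k * 1))) x :=
    ((Real.hasDerivAt_sin (k * x)).comp x ((hasDerivAt_id x).const_mul k)).const_mul ε
  rw [h.deriv]; ring

/-- A localized eigenvector exists on a quadrilateral 1-2-3-4 embedded in a metric
graph when the resonance conditions on the lengths hold. -/
theorem quadrilateral_localized_eigenvector
    (l1 l2 l3 l4 : ℝ) (hl1 : 0 < l1) (hl2 : 0 < l2) (hl3 : 0 < l3) (hl4 : 0 < l4)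
    (n1 n2 n3 n4 : ℕ) (hn1 : 0 < n1) (hn2 : 0 < n2) (hn3 : 0 < n3) (hn4 : 0 < n4)
    (h12 : l1 / (n1 : ℝ) = l2 / (n2 : ℝ))
    (h23 : l2 / (n2 : ℝ) = l3 / (n3 : ℝ))
    (h34 : l3 / (n3 : ℝ) = l4 / (n4 : ℝ))
    (heven : Even (n1 + n2 + n3 + n4)) :
    let k := (n1 : ℝ) * π / l1
    let ε1 : ℝ := 1
    let ε2 : ℝ := (-1 : ℝ) ^ n1 * ε1
    let ε3 : ℝ := (-1 : ℝ) ^ n2 * ε2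
    let ε4 : ℝ := (-1 : ℝ) ^ n3 * ε3
    let V1 : ℝ → ℝ := fun x => ε1 * Real.sin (k * x)
    let V2 : ℝ → ℝ := fun x => ε2 * Real.sin (k * x)
    let V3 : ℝ → ℝ := fun x => ε3 * Real.sin (k * x)
    let V4 : ℝ → ℝ := fun x => ε4 * Real.sin (k * x)
    (V1 0 = 0 ∧ V1 l1 = 0) ∧ (V2 0 = 0 ∧ V2 l2 = 0) ∧
    (V3 0 = 0 ∧ V3 l3 = 0) ∧ (V4 0 = 0 ∧ V4 l4 = 0) ∧
    deriv V1 l1 = deriv V2 0 ∧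
    deriv V2 l2 = deriv V3 0 ∧
    deriv V3 l3 = deriv V4 0 ∧
    deriv V4 l4 = deriv V1 0 ∧
    V1 ≠ 0 ∧ V2 ≠ 0 ∧ V3 ≠ 0 ∧ V4 ≠ 0 := by
  intro k ε1 ε2 ε3 ε4 V1 V2 V3 V4
  have hn1' : (n1 : ℝ) ≠ 0 := Nat.cast_ne_zero.mpr hn1.ne'
  have hn2' : (n2 : ℝ) ≠ 0 := Nat.cast_ne_zero.mpr hn2.ne'
  have hn3' : (n3 : ℝ) ≠ 0 := Nat.cast_ne_zero.mpr hn3.ne'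
  have hn4' : (n4 : ℝ) ≠ 0 := Nat.cast_ne_zero.mpr hn4.ne'
  have hk1 : k * l1 = n1 * π := by
    show (n1 : ℝ) * π / l1 * l1 = n1 * π
    field_simp
  have hk2 : k * l2 = n2 * π := by
    show (n1 : ℝ) * π / l1 * l2 = n2 * π
    field_simp at h12 ⊢
    linear_combination (-1) * h12
  have hk3 : k * l3 = n3 * π := by
    show (n1 : ℝ) * π / l1 * l3 = n3 * π
    field_simp at h12 h23 ⊢
    have : l3 * (n1:ℝ) * n2 = l1 * n3 * n2 := by
      calc l3 * (n1:ℝ) * n2 = (l3 * n2) * n1 := by ring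
        _ = (l2 * n3) * n1 := by rw [h23]; ring
        _ = (l2 * n1) * n3 := by ring
        _ = (l1 * n2) * n3 := by rw [h12]; ring
        _ = l1 * n3 * n2 := by ring
    have h3 : l3 * (n1:ℝ) = l1 * n3 := by
      exact mul_right_cancel₀ hn2' this
    linear_combination h3
  have hk4 : k * l4 = n4 * π := by
    show (n1 : ℝ) * π / l1 * l4 = n4 * π
    have h14 : l1 / (n1 : ℝ) = l4 / (n4 : ℝ) := by rw [h12, h23, h34]
    field_simp at h14 ⊢
    linear_combination (-1) * h14
  have hkpos : 0 < k := by
    apply div_pos (mul_pos (by exact_mod_cast hn1) Real.pi_pos) hl1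
  have hsin : ∀ (m : ℕ), Real.sin ((m : ℝ) * π) = 0 := fun m => by
    simpa using Real.sin_int_mul_pi (m : ℤ)
  have hcos : ∀ (m : ℕ), Real.cos ((m : ℝ) * π) = (-1 : ℝ) ^ m := fun m => by
    simpa using Real.cos_add_nat_mul_pi 0 m
  have hV : ∀ ε : ℝ, ε ≠ 0 → (fun x => ε * Real.sin (k * x)) ≠ 0 := by
    intro ε hε h
    have h2 := congrFun h (π / 2 / k)
    simp only [Pi.zero_apply] at h2
    rw [mul_div_cancel₀ _ hkpos.ne', Real.sin_pi_div_two, mul_one] at h2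
    exact hε h2
  have hε1 : ε1 ≠ 0 := one_ne_zero
  have hε2 : ε2 ≠ 0 := by
    show (-1 : ℝ) ^ n1 * ε1 ≠ 0
    exact mul_ne_zero (pow_ne_zero _ (by norm_num)) hε1
  have hε3 : ε3 ≠ 0 := by
    show (-1 : ℝ) ^ n2 * ε2 ≠ 0
    exact mul_ne_zero (pow_ne_zero _ (by norm_num)) hε2
  have hε4 : ε4 ≠ 0 := by
    show (-1 : ℝ) ^ n3 * ε3 ≠ 0
    exact mul_ne_zero (pow_ne_zero _ (by norm_num)) hε3
  have heven' : (-1 : ℝ) ^ (n1 + n2 + n3 + n4) = 1 := Even.neg_one_pow heven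
  refine ⟨⟨by simp [V1], by show ε1 * Real.sin (k * l1) = 0; rw [hk1, hsin]; ring⟩,
    ⟨by simp [V2], by show ε2 * Real.sin (k * l2) = 0; rw [hk2, hsin]; ring⟩,
    ⟨by simp [V3], by show ε3 * Real.sin (k * l3) = 0; rw [hk3, hsin]; ring⟩,
    ⟨by simp [V4], by show ε4 * Real.sin (k * l4) = 0; rw [hk4, hsin]; ring⟩,
    ?_, ?_, ?_, ?_, hV ε1 hε1, hV ε2 hε2, hV ε3 hε3, hV ε4 hε4⟩
  · show deriv (fun x => ε1 * Real.sin (k * x)) l1 = deriv (fun x => ε2 * Real.sin (k * x)) 0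
    rw [deriv_eps_sin, deriv_eps_sin, hk1, hcos, mul_zero, Real.cos_zero]
    show 1 * k * (-1:ℝ)^n1 = ((-1:ℝ)^n1 * 1) * k * 1
    ring
  · show deriv (fun x => ε2 * Real.sin (k * x)) l2 = deriv (fun x => ε3 * Real.sin (k * x)) 0
    rw [deriv_eps_sin, deriv_eps_sin, hk2, hcos, mul_zero, Real.cos_zero]
    show ((-1:ℝ)^n1 * 1) * k * (-1:ℝ)^n2 = ((-1:ℝ)^n2 * ((-1:ℝ)^n1 * 1)) * k * 1
    ring
  · show deriv (fun x => ε3 * Real.sin (k * x)) l3 = deriv (fun x => ε4 * Real.sin (k * x)) 0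
    rw [deriv_eps_sin, deriv_eps_sin, hk3, hcos, mul_zero, Real.cos_zero]
    show ((-1:ℝ)^n2 * ((-1:ℝ)^n1 * 1)) * k * (-1:ℝ)^n3
      = ((-1:ℝ)^n3 * ((-1:ℝ)^n2 * ((-1:ℝ)^n1 * 1))) * k * 1
    ring
  · show deriv (fun x => ε4 * Real.sin (k * x)) l4 = deriv (fun x => ε1 * Real.sin (k * x)) 0
    rw [deriv_eps_sin, deriv_eps_sin, hk4, hcos, mul_zero, Real.cos_zero]
    show ((-1:ℝ)^n3 * ((-1:ℝ)^n2 * ((-1:ℝ)^n1 * 1))) * k * (-1:ℝ)^n4 = 1 * k * 1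
    have : ((-1:ℝ)^n3 * ((-1:ℝ)^n2 * ((-1:ℝ)^n1 * 1))) * (-1:ℝ)^n4
        = (-1:ℝ) ^ (n1 + n2 + n3 + n4) := by
      rw [pow_add, pow_add, pow_add]; ring
    calc ((-1:ℝ)^n3 * ((-1:ℝ)^n2 * ((-1:ℝ)^n1 * 1))) * k * (-1:ℝ)^n4
        = ((-1:ℝ)^n3 * ((-1:ℝ)^n2 * ((-1:ℝ)^n1 * 1)) * (-1:ℝ)^n4) * k := by ring
      _ = 1 * k * 1 := by rw [this, heven']; ring
end

section
/- Let m ≥ 3, let l_1, ..., l_m > 0 and let n_1, ..., n_m be positive integers with l_1/n_1 = l_2/n_2 = ... = l_m/n_m and n_1 + ... + n_m even. Set k = n_1 π / l_1, ε_1 = 1 and ε_{j+1} = (-1)^{n_j} ε_j, and define V_j(x) = ε_j sin(k x) for j = 1, ..., m. Then V_j(0) = V_j(l_j) = 0 for all j and V_j'(l_j) = V_{j+1}'(0) for all j (indices cyclic mod m), and none of the V_j is identically zero; i.e., every polygon whose edge lengths satisfy these resonance conditions carries a localized eigenvector of the generalized Laplacian with eigenvalue -k². -/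
open Real

lemma cos_nat_mul_pi' (n : ℕ) : Real.cos ((n : ℝ) * π) = (-1) ^ n := by
  have := Real.cos_nat_mul_pi_sub 0 n
  simpa using this

/-- Every polygon (m-gon, m ≥ 3) whose edge lengths satisfy the resonance
conditions carries a localized eigenvector of the generalized Laplacian.
Edges are indexed by j = 0, ..., m-1 and oriented cyclically. -/
theorem polygon_localized_eigenvector
    (m : ℕ) (hm : 3 ≤ m)
    (l : ℕ → ℝ) (hl : ∀ j < m, 0 < l j)
    (n : ℕ → ℕ) (hn : ∀ j < m, 0 < n j)
    (hres : ∀ j < m, l j / (n j : ℝ) = l 0 / (n 0 : ℝ))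
    (heven : Even (∑ j ∈ Finset.range m, n j))
    (ε : ℕ → ℝ) (hε0 : ε 0 = 1)
    (hεrec : ∀ j, j + 1 < m → ε (j + 1) = (-1 : ℝ) ^ (n j) * ε j) :
    let k := (n 0 : ℝ) * π / l 0
    let V : ℕ → ℝ → ℝ := fun j x => ε j * Real.sin (k * x)
    (∀ j < m, V j 0 = 0 ∧ V j (l j) = 0) ∧
    (∀ j < m, deriv (V j) (l j) = deriv (V ((j + 1) % m)) 0) ∧
    (∀ j < m, V j ≠ 0) := by
  intro k V
  have h0m : 0 < m := by omega
  have hl0 : 0 < l 0 := hl 0 h0m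
  have hn0 : 0 < n 0 := hn 0 h0m
  have hk : 0 < k := by
    apply div_pos (mul_pos _ Real.pi_pos) hl0
    exact_mod_cast hn0
  -- k * l j = n j * π
  have hkl : ∀ j < m, k * l j = (n j : ℝ) * π := by
    intro j hj
    have hnj : (0 : ℝ) < (n j : ℝ) := by exact_mod_cast hn j hj
    have hr := hres j hj
    have hlj : l j = (n j : ℝ) * l 0 / (n 0 : ℝ) := by
      field_simp at hr ⊢
      linarith [hr]
    rw [hlj]
    show (n 0 : ℝ) * π / l 0 * ((n j : ℝ) * l 0 / (n 0 : ℝ)) = _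
    have hn0' : (n 0 : ℝ) ≠ 0 := by positivity
    field_simp
  -- ε j = (-1)^(partial sum)
  have hεval : ∀ j ≤ m, j ≠ m → ε j = (-1 : ℝ) ^ (∑ i ∈ Finset.range j, n i) := by
    intro j
    induction j with
    | zero => intro _ _; simpa using hε0
    | succ j ih =>
      intro hjm hne
      have hj1 : j + 1 < m := by omega
      rw [hεrec j hj1, ih (by omega) (by omega), Finset.sum_range_succ, pow_add]
      ring
  have hεsq : ∀ j < m, ε j = 1 ∨ ε j = -1 := by
    intro j hj
    rw [hεval j (by omega) (by omega)]
    rcases Nat.even_or_odd (∑ i ∈ Finset.range j, n i) with h | h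
    · left; exact h.neg_one_pow
    · right; exact h.neg_one_pow
  -- derivative formula
  have hd : ∀ (c x : ℝ), deriv (fun y => c * Real.sin (k * y)) x = c * (Real.cos (k * x) * k) := by
    intro c x
    have h1 : HasDerivAt (fun y : ℝ => k * y) k x := by
      simpa using (hasDerivAt_id x).const_mul k
    have h2 : HasDerivAt (fun y => Real.sin (k * y)) (Real.cos (k * x) * k) x :=
      (Real.hasDerivAt_sin (k * x)).comp x h1
    exact (h2.const_mul c).deriv
  refine ⟨?_, ?_, ?_⟩
  · intro j hj
    constructor
    · show ε j * Real.sin (k * 0) = 0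
      simp
    · show ε j * Real.sin (k * l j) = 0
      rw [hkl j hj, Real.sin_nat_mul_pi, mul_zero]
  · intro j hj
    show deriv (fun x => ε j * Real.sin (k * x)) (l j)
        = deriv (fun x => ε ((j + 1) % m) * Real.sin (k * x)) 0
    rw [hd, hd, hkl j hj, cos_nat_mul_pi', mul_zero, Real.cos_zero]
    rcases Nat.lt_or_ge (j + 1) m with h | h
    · rw [Nat.mod_eq_of_lt h, hεrec j h]
      ring
    · have hjm : j + 1 = m := by omega
      have : (j + 1) % m = 0 := by rw [hjm, Nat.mod_self]
      rw [this, hε0, hεval j (by omega) (by omega)]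
      have hsum : ∑ i ∈ Finset.range m, n i = (∑ i ∈ Finset.range j, n i) + n j := by
        rw [← hjm, Finset.sum_range_succ]
      have : ((-1 : ℝ) ^ (∑ i ∈ Finset.range j, n i)) * (-1 : ℝ) ^ (n j) = 1 := by
        rw [← pow_add, ← hsum]
        exact heven.neg_one_pow
      calc (-1 : ℝ) ^ (∑ i ∈ Finset.range j, n i) * ((-1 : ℝ) ^ (n j) * k)
          = ((-1 : ℝ) ^ (∑ i ∈ Finset.range j, n i) * (-1 : ℝ) ^ (n j)) * k := by ring
        _ = 1 * (1 * k) := by rw [this]; ring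
  · intro j hj hV
    have hε : ε j ≠ 0 := by rcases hεsq j hj with h | h <;> rw [h] <;> norm_num
    have := congrFun hV (π / (2 * k))
    simp only [Pi.zero_apply] at this
    have hval : k * (π / (2 * k)) = π / 2 := by field_simp
    rw [show V j (π / (2 * k)) = ε j * Real.sin (k * (π / (2 * k))) from rfl, hval,
      Real.sin_pi_div_two, mul_one] at this
    exact hε this
end
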